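/- There exists a unique point q' ∈ (q_B, 1) such that W(q') = μ. -/

import Mathlib

set_option autoImplicit false

set_option maxHeartbeats 1600000 in
/-- There exists a unique point `q' ∈ (q_B, 1)` with `W(q') = μ`. -/
theorem stmt_12 (l μ h ρ σt R : ℝ)
    (hl : 0 < l) (hlμ : l < μ) (hμh : μ < h) (hρ : 0 < ρ) (hσt : 0 < σt)
    (hR : 0 < R) (hlR : l < μ - R)
    (kt qB dB : ℝ)
    (hkt : kt = Real.sqrt (1 + 8 * ρ * (σt / (h - l)) ^ 2))
    (hqB : qB = (l - μ + R) * ((1 - kt) / 2)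
      / ((h - l) * ((1 + kt) / 2) + l - μ + R))
    (hdB : dB = (μ - R - qB * h - (1 - qB) * l)
      / (qB ^ ((1 - kt) / 2) * (1 - qB) ^ ((1 + kt) / 2)))
    (W : ℝ → ℝ)
    (hW : ∀ q : ℝ, W q = q * h + (1 - q) * l
      + dB * q ^ ((1 - kt) / 2) * (1 - q) ^ ((1 + kt) / 2)) :
    ∃! q' : ℝ, q' ∈ Set.Ioo qB 1 ∧ W q' = μ := by
  set A : ℝ := (1 - kt) / 2 with hAdef
  set B : ℝ := (1 + kt) / 2 with hBdef
  have hhl : 0 < h - l := by linarith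
  have hkt1 : 1 < kt := by
    have hc : 0 < 8 * ρ * (σt / (h - l)) ^ 2 := by positivity
    have : Real.sqrt 1 < Real.sqrt (1 + 8 * ρ * (σt / (h - l)) ^ 2) :=
      Real.sqrt_lt_sqrt (by norm_num) (by linarith)
    rw [Real.sqrt_one] at this
    rw [hkt]; exact this
  have hA0 : A < 0 := by rw [hAdef]; linarith
  have hB1 : 1 < B := by rw [hBdef]; linarith
  have hAB : B = 1 - A := by rw [hAdef, hBdef]; ring
  have hD : 0 < (h - l) * B + l - μ + R := by
    nlinarith [mul_pos hhl (show (0:ℝ) < B - 1 by linarith)]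
  have hqB0 : 0 < qB := by
    rw [hqB]
    apply div_pos _ hD
    nlinarith [mul_pos (show (0:ℝ) < μ - R - l by linarith) (show (0:ℝ) < -A by linarith)]
  have hqB1 : qB < 1 := by
    rw [hqB, div_lt_one hD]
    nlinarith [mul_pos (show (0:ℝ) < h - μ + R by linarith) (show (0:ℝ) < B by linarith)]
  have h1qB : 0 < 1 - qB := by linarith
  have hX : 0 < qB ^ A * (1 - qB) ^ B :=
    mul_pos (Real.rpow_pos_of_pos hqB0 A) (Real.rpow_pos_of_pos h1qB B)
  have hprod : dB * qB ^ A * (1 - qB) ^ B = μ - R - qB * h - (1 - qB) * l := by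
    rw [hdB]; field_simp
  have hWqB : W qB = μ - R := by rw [hW, hprod]; ring
  have hW1 : W 1 = h := by
    rw [hW]
    norm_num [Real.zero_rpow (show B ≠ 0 by linarith)]
  have hdB0 : 0 < dB := by
    rw [hdB]
    apply div_pos _ hX
    have h5 : qB * (h - l) < μ - R - l := by
      rw [hqB, div_mul_eq_mul_div, div_lt_iff₀ hD]
      nlinarith [mul_pos (show (0:ℝ) < μ - R - l by linarith)
        (show (0:ℝ) < h - μ + R by linarith), hAB,
        mul_pos (mul_pos (show (0:ℝ) < μ - R - l by linarith) (show (0:ℝ) < B - 1 by linarith)) hhl]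
    nlinarith [h5]
  -- continuity
  have hWeq : W = fun q : ℝ => q * h + (1 - q) * l + dB * q ^ A * (1 - q) ^ B := funext hW
  have hWcont : ContinuousOn W (Set.Icc qB 1) := by
    rw [hWeq]
    intro x hx
    have hx0 : 0 < x := lt_of_lt_of_le hqB0 hx.1
    have ha : ContinuousAt (fun q : ℝ => q ^ A) x :=
      Real.continuousAt_rpow_const x A (Or.inl hx0.ne')
    have hb : ContinuousAt (fun q : ℝ => (1 - q) ^ B) x :=
      (Real.continuousAt_rpow_const (1 - x) B (Or.inr (by linarith))).comp
        (continuousAt_const.sub continuousAt_id)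
    exact (((continuousAt_id.mul continuousAt_const).add
      ((continuousAt_const.sub continuousAt_id).mul continuousAt_const)).add
      (((continuousAt_const.mul ha)).mul hb)).continuousWithinAt
  -- first derivative
  have keyd : ∀ x ∈ Set.Ioo (0:ℝ) 1, HasDerivAt W
      ((fun q : ℝ => (h - l) + dB * ((A - q) * (q ^ (A - 1) * (1 - q) ^ (B - 1)))) x) x := by
    intro x hx
    obtain ⟨hx0, hx1⟩ := hx
    have h1x : 0 < 1 - x := by linarith
    have d1 : HasDerivAt (fun q : ℝ => q ^ A) (A * x ^ (A - 1)) x :=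
      Real.hasDerivAt_rpow_const (Or.inl hx0.ne')
    have d2' : HasDerivAt (fun q : ℝ => 1 - q) (-1) x := by
      simpa using (hasDerivAt_id x).const_sub 1
    have d2 : HasDerivAt (fun q : ℝ => (1 - q) ^ B) (B * (1 - x) ^ (B - 1) * (-1)) x :=
      (Real.hasDerivAt_rpow_const (Or.inl h1x.ne')).comp x d2'
    have d3 : HasDerivAt (fun q : ℝ => q * h + (1 - q) * l + dB * q ^ A * (1 - q) ^ B)
        (1 * h + (-1) * l + (dB * (A * x ^ (A - 1)) * (1 - x) ^ B
          + dB * x ^ A * (B * (1 - x) ^ (B - 1) * (-1)))) x :=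
      (((hasDerivAt_id x).mul_const h).add (d2'.mul_const l)).add
        ((d1.const_mul dB).mul d2)
    rw [← hWeq] at d3
    have e1 : x ^ A = x ^ (A - 1) * x := by
      have := Real.rpow_add_one hx0.ne' (A - 1)
      rw [show A - 1 + 1 = A by ring] at this
      simpa using this
    have e2 : (1 - x) ^ B = (1 - x) ^ (B - 1) * (1 - x) := by
      have := Real.rpow_add_one h1x.ne' (B - 1)
      rw [show B - 1 + 1 = B by ring] at this
      simpa using this
    have hde : 1 * h + (-1) * l + (dB * (A * x ^ (A - 1)) * (1 - x) ^ B
          + dB * x ^ A * (B * (1 - x) ^ (B - 1) * (-1)))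
        = (h - l) + dB * ((A - x) * (x ^ (A - 1) * (1 - x) ^ (B - 1))) := by
      rw [e1, e2, hAB]; ring
    show HasDerivAt W (h - l + dB * ((A - x) * (x ^ (A - 1) * (1 - x) ^ (B - 1)))) x
    exact hde ▸ d3
  -- second derivative
  have keydd : ∀ x ∈ Set.Ioo (0:ℝ) 1,
      HasDerivAt (fun q : ℝ => (h - l) + dB * ((A - q) * (q ^ (A - 1) * (1 - q) ^ (B - 1))))
        (dB * (A * (A - 1)) * (x ^ (A - 2) * (1 - x) ^ (B - 2))) x := by
    intro x hx
    obtain ⟨hx0, hx1⟩ := hx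
    have h1x : 0 < 1 - x := by linarith
    have d4 : HasDerivAt (fun q : ℝ => q ^ (A - 1)) ((A - 1) * x ^ (A - 1 - 1)) x :=
      Real.hasDerivAt_rpow_const (Or.inl hx0.ne')
    rw [show A - 1 - 1 = A - 2 by ring] at d4
    have d2' : HasDerivAt (fun q : ℝ => 1 - q) (-1) x := by
      simpa using (hasDerivAt_id x).const_sub 1
    have d5 : HasDerivAt (fun q : ℝ => (1 - q) ^ (B - 1))
        ((B - 1) * (1 - x) ^ (B - 1 - 1) * (-1)) x :=
      (Real.hasDerivAt_rpow_const (Or.inl h1x.ne')).comp x d2'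
    rw [show B - 1 - 1 = B - 2 by ring] at d5
    have d6 : HasDerivAt (fun q : ℝ => A - q) (-1) x := by
      simpa using (hasDerivAt_id x).const_sub A
    have dP := d4.mul d5
    have dQ := d6.mul dP
    have total : HasDerivAt
        (fun q : ℝ => (h - l) + dB * ((A - q) * (q ^ (A - 1) * (1 - q) ^ (B - 1))))
        (0 + dB * ((-1) * (x ^ (A - 1) * (1 - x) ^ (B - 1))
          + (A - x) * ((A - 1) * x ^ (A - 2) * ((1 - x) ^ (B - 1))
            + x ^ (A - 1) * ((B - 1) * (1 - x) ^ (B - 2) * (-1))))) x :=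
      (hasDerivAt_const x (h - l)).add (dQ.const_mul dB)
    have e1 : x ^ (A - 1) = x ^ (A - 2) * x := by
      have := Real.rpow_add_one hx0.ne' (A - 2)
      rw [show A - 2 + 1 = A - 1 by ring] at this
      simpa using this
    have e2 : (1 - x) ^ (B - 1) = (1 - x) ^ (B - 2) * (1 - x) := by
      have := Real.rpow_add_one h1x.ne' (B - 2)
      rw [show B - 2 + 1 = B - 1 by ring] at this
      simpa using this
    have hde : 0 + dB * ((-1) * (x ^ (A - 1) * (1 - x) ^ (B - 1))
          + (A - x) * ((A - 1) * x ^ (A - 2) * ((1 - x) ^ (B - 1))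
            + x ^ (A - 1) * ((B - 1) * (1 - x) ^ (B - 2) * (-1))))
        = dB * (A * (A - 1)) * (x ^ (A - 2) * (1 - x) ^ (B - 2)) := by
      rw [e1, e2, hAB]; ring
    exact hde ▸ total
  -- strict convexity
  have hconv : StrictConvexOn ℝ (Set.Icc qB 1) W := by
    refine strictConvexOn_of_deriv2_pos (convex_Icc qB 1) hWcont fun x hx => ?_
    rw [interior_Icc] at hx
    have hx01 : x ∈ Set.Ioo (0:ℝ) 1 := ⟨lt_trans hqB0 hx.1, hx.2⟩
    have hmem : Set.Ioo (0:ℝ) 1 ∈ nhds x := isOpen_Ioo.mem_nhds hx01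
    have hde : deriv W =ᶠ[nhds x]
        (fun q : ℝ => (h - l) + dB * ((A - q) * (q ^ (A - 1) * (1 - q) ^ (B - 1)))) :=
      Filter.eventuallyEq_of_mem hmem (fun y hy => (keyd y hy).deriv)
    show 0 < deriv (deriv W) x
    rw [hde.deriv_eq, (keydd x hx01).deriv]
    have hAA : 0 < A * (A - 1) := mul_pos_of_neg_of_neg hA0 (by linarith)
    exact mul_pos (mul_pos hdB0 hAA)
      (mul_pos (Real.rpow_pos_of_pos hx01.1 _)
        (Real.rpow_pos_of_pos (by linarith [hx01.2] : (0:ℝ) < 1 - x) _))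
  -- existence
  obtain ⟨q', hq'mem, hq'W⟩ := intermediate_value_Ioo (le_of_lt hqB1) hWcont
    (by rw [hWqB, hW1]; exact ⟨by linarith, hμh⟩ : μ ∈ Set.Ioo (W qB) (W 1))
  -- uniqueness helper
  have huniq : ∀ x y : ℝ, x ∈ Set.Ioo qB 1 → y ∈ Set.Ioo qB 1 → x < y →
      W x = μ → W y = μ → False := by
    intro x y hx hy hxy hWx hWy
    have hyqB : 0 < y - qB := by linarith [hx.1]
    set a : ℝ := (y - x) / (y - qB) with hadef
    set b : ℝ := (x - qB) / (y - qB) with hbdef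
    have ha : 0 < a := div_pos (by linarith) hyqB
    have hb : 0 < b := div_pos (by linarith [hx.1]) hyqB
    have hab : a + b = 1 := by rw [hadef, hbdef]; field_simp; ring
    have hcomb : a • qB + b • y = x := by
      rw [hadef, hbdef, smul_eq_mul, smul_eq_mul]
      field_simp
      ring
    have hlt := hconv.2 (Set.mem_Icc.mpr ⟨le_refl qB, le_of_lt hqB1⟩)
      (Set.mem_Icc.mpr ⟨le_of_lt hy.1, le_of_lt hy.2⟩)
      (ne_of_lt hy.1) ha hb hab
    rw [hcomb, hWqB, hWy, hWx] at hlt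
    rw [smul_eq_mul, smul_eq_mul] at hlt
    nlinarith [mul_pos ha hR]
  refine ⟨q', ⟨hq'mem, hq'W⟩, ?_⟩
  rintro y ⟨hymem, hyW⟩
  by_contra hne
  rcases lt_or_gt_of_ne hne with hlt | hgt
  · exact huniq y q' hymem hq'mem hlt hyW hq'W
  · exact huniq q' y hq'mem hymem hgt hq'W hyW
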